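/- Let V be a finite set with a fixed cyclic ordering, U the universe of all oriented bipartitions of V with a submodular order function |·| (symmetric: |s⃗| = |s⃗*|; submodular: |s⃗ ∨ t⃗| + |s⃗ ∧ t⃗| ≤ |s⃗| + |t⃗|) under which (∅,V) has order 0. Then for every k > 0, the set S⃗_k of circle separations of order < k is a submodular separation system: for any two of its elements, their join or their meet lies in S⃗_k. -/

import Mathlib

namespace CircProof
variable {N : ℕ} [NeZero N]
open Fin.CommRing

lemma sub_val (u v : Fin N) : (u - v).val = (u.val + (N - v.val)) % N := by
  rw [Fin.sub_def]; simp [Nat.add_comm]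

lemma val_cast (i : ℕ) : ((i : Fin N)).val = i % N := Fin.val_natCast i N

def IsArc' (A : Set (Fin N)) : Prop :=
  ∃ (a : Fin N) (len : ℕ), A = {x : Fin N | ∃ i : ℕ, i < len ∧ x = a + (i : Fin N)}

lemma isArc_iff (A : Set (Fin N)) :
    IsArc' A ↔ ∃ (a : Fin N) (m : ℕ), m ≤ N ∧ A = {x | (x - a).val < m} := by
  have hN := Nat.pos_of_ne_zero (NeZero.ne N)
  constructor
  · rintro ⟨a, len, rfl⟩
    by_cases h : len < N
    · refine ⟨a, len, h.le, ?_⟩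
      ext x; simp only [Set.mem_setOf_eq]
      constructor
      · rintro ⟨i, hi, rfl⟩
        rw [add_sub_cancel_left, val_cast, Nat.mod_eq_of_lt (hi.trans h)]; exact hi
      · intro hx
        refine ⟨(x - a).val, hx, ?_⟩
        rw [Fin.cast_val_eq_self]; ring
    · refine ⟨a, N, le_rfl, ?_⟩
      ext x; simp only [Set.mem_setOf_eq]
      constructor
      · intro _; exact (x - a).isLt
      · intro _
        refine ⟨(x - a).val, lt_of_lt_of_le (x - a).isLt (not_lt.1 h), ?_⟩
        rw [Fin.cast_val_eq_self]; ring
  · rintro ⟨a, m, hm, rfl⟩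
    refine ⟨a, m, ?_⟩
    ext x; simp only [Set.mem_setOf_eq]
    constructor
    · intro hx
      refine ⟨(x - a).val, hx, ?_⟩
      rw [Fin.cast_val_eq_self]; ring
    · rintro ⟨i, hi, rfl⟩
      rw [add_sub_cancel_left, val_cast, Nat.mod_eq_of_lt (lt_of_lt_of_le hi hm)]; exact hi

lemma isArc_empty : IsArc' (∅ : Set (Fin N)) := by
  refine ⟨0, 0, ?_⟩; ext x; simp

lemma isArc_univ : IsArc' (Set.univ : Set (Fin N)) := by
  rw [isArc_iff]
  exact ⟨0, N, le_rfl, by ext x; simpa using x.isLt⟩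

/-- Interval in the coordinate cut just after `p`. -/
def Itv (p : Fin N) (lo hi : ℕ) : Set (Fin N) :=
  {x | lo ≤ (x - (p + 1)).val ∧ (x - (p + 1)).val < hi}

lemma isArc_Itv (p : Fin N) (lo hi : ℕ) (hhi : hi ≤ N) : IsArc' (Itv p lo hi) := by
  refine ⟨p + 1 + (lo : Fin N), hi - lo, ?_⟩
  ext x
  simp only [Itv, Set.mem_setOf_eq]
  constructor
  · rintro ⟨h1, h2⟩
    refine ⟨(x - (p + 1)).val - lo, by omega, ?_⟩
    have heq : lo + ((x - (p+1)).val - lo : ℕ) = (x - (p+1)).val := by omega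
    have e : (lo : Fin N) + (((x - (p+1)).val - lo : ℕ) : Fin N) = x - (p + 1) := by
      rw [← Nat.cast_add, heq, Fin.cast_val_eq_self]
    rw [add_assoc, e]; ring
  · rintro ⟨i, hi2, rfl⟩
    have hlt : lo + i < N := by omega
    have : (p + 1 + (lo : Fin N) + (i : Fin N)) - (p + 1) = ((lo + i : ℕ) : Fin N) := by
      push_cast; ring
    rw [this, val_cast, Nat.mod_eq_of_lt hlt]
    omega

/-- Cut lemma: an arc avoiding `p` is an interval in the coordinate cut after `p`. -/
lemma arc_cut {A : Set (Fin N)} (hA : IsArc' A) {p : Fin N} (hp : p ∉ A) :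
    ∃ lo hi, hi ≤ N ∧ A = Itv p lo hi := by
  have hN := Nat.pos_of_ne_zero (NeZero.ne N)
  rw [isArc_iff] at hA
  obtain ⟨a, m, hm, rfl⟩ := hA
  set a' := (a - (p + 1)).val with ha'
  have ha'lt : a' < N := (a - (p+1)).isLt
  -- coordinate identity : (x - a).val = ((x-(p+1)).val + (N - a')) % N
  have key : ∀ x : Fin N, (x - a).val = ((x - (p+1)).val + (N - a')) % N := by
    intro x
    have : x - a = (x - (p+1)) - (a - (p+1)) := by ring
    rw [this, sub_val]
  have hpcoord : (p - (p+1)).val = N - 1 := by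
    have : p - (p + 1) = (0 : Fin N) - 1 := by ring
    rw [this, sub_val]
    simp [Fin.val_one']
    rcases Nat.eq_or_lt_of_le hN with h | h
    · simp [← h]
    · rw [Nat.mod_eq_of_lt h, Nat.mod_eq_of_lt (by omega)]
  -- p ∉ A means a' + m ≤ N
  have hc : a' + m ≤ N := by
    by_contra hcon
    apply hp
    show (p - a).val < m
    rw [key p, hpcoord]
    have h2 : (N - 1 + (N - a')) = (N - 1 - a') + N := by omega
    rw [h2, Nat.add_mod_right, Nat.mod_eq_of_lt (by omega)]
    omega
  refine ⟨a', a' + m, hc, ?_⟩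
  ext x
  simp only [Itv, Set.mem_setOf_eq]
  rw [key x]
  set t := (x - (p+1)).val with ht
  have htlt : t < N := (x - (p+1)).isLt
  constructor
  · intro h
    by_cases hta : a' ≤ t
    · constructor; exact hta
      rw [show (t + (N - a')) = (t - a') + N by omega, Nat.add_mod_right,
        Nat.mod_eq_of_lt (by omega)] at h
      omega
    · exfalso
      rw [Nat.mod_eq_of_lt (by omega)] at h
      omega
  · rintro ⟨h1, h2⟩
    rw [show (t + (N - a')) = (t - a') + N by omega, Nat.add_mod_right,
      Nat.mod_eq_of_lt (by omega)]
    omega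

lemma isArc_union {A B : Set (Fin N)} (hA : IsArc' A) (hB : IsArc' B)
    (hAB : (A ∩ B).Nonempty) : A ∪ B = Set.univ ∨ IsArc' (A ∪ B) := by
  by_cases h : A ∪ B = Set.univ
  · exact Or.inl h
  right
  obtain ⟨p, hp⟩ := Set.ne_univ_iff_exists_notMem _ |>.1 h
  obtain ⟨l1, h1, hh1, rfl⟩ := arc_cut hA (fun hx => hp (Or.inl hx))
  obtain ⟨l2, h2, hh2, rfl⟩ := arc_cut hB (fun hx => hp (Or.inr hx))
  obtain ⟨q, hq1, hq2⟩ := hAB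
  have hA' : Itv p l1 h1 ∪ Itv p l2 h2 = Itv p (min l1 l2) (max h1 h2) := by
    ext x
    simp only [Itv, Set.mem_union, Set.mem_setOf_eq]
    obtain ⟨hq1a, hq1b⟩ := hq1
    obtain ⟨hq2a, hq2b⟩ := hq2
    omega
  rw [hA']
  exact isArc_Itv _ _ _ (by omega)

lemma isArc_inter {A B : Set (Fin N)} (hA : IsArc' A) (hB : IsArc' B)
    {p : Fin N} (hp : p ∉ A ∪ B) : IsArc' (A ∩ B) := by
  obtain ⟨l1, h1, hh1, rfl⟩ := arc_cut hA (fun hx => hp (Or.inl hx))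
  obtain ⟨l2, h2, hh2, rfl⟩ := arc_cut hB (fun hx => hp (Or.inr hx))
  have : Itv p l1 h1 ∩ Itv p l2 h2 = Itv p (max l1 l2) (min h1 h2) := by
    ext x; simp only [Itv, Set.mem_inter_iff, Set.mem_setOf_eq]; omega
  rw [this]
  exact isArc_Itv _ _ _ (by omega)

lemma isArc_eq : @IsArc' N _ = fun A => IsArc' A := rfl

end CircProof

/-- `A` is an arc of the cyclic order on `Fin N`: a (possibly empty) contiguous segment. -/
def IsArc {N : ℕ} [NeZero N] (A : Set (Fin N)) : Prop :=
  ∃ (a : Fin N) (len : ℕ), A = {x : Fin N | ∃ i : ℕ, i < len ∧ x = a + (Fin.ofNat N i : Fin N)}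

/-- An oriented circle separation `(A, Aᶜ)` of `Fin N`, represented by its first side:
both sides are arcs of the cyclic order. -/
def IsCircleSep {N : ℕ} [NeZero N] (A : Set (Fin N)) : Prop :=
  IsArc A ∧ IsArc Aᶜ

lemma isArc_eq_isArc' {N : ℕ} [NeZero N] (A : Set (Fin N)) : IsArc A ↔ CircProof.IsArc' A :=
  Iff.rfl

theorem circle_separations_submodular {N : ℕ} [NeZero N]
    (f : Set (Fin N) → ℝ)
    (hsymm : ∀ A : Set (Fin N), f A = f Aᶜ)
    (hsub : ∀ A B : Set (Fin N), f (A ∪ B) + f (A ∩ B) ≤ f A + f B)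
    (hempty : f (∅ : Set (Fin N)) = 0)
    (k : ℝ) (hk : 0 < k) :
    (∀ A : Set (Fin N), IsCircleSep A ∧ f A < k → IsCircleSep Aᶜ ∧ f Aᶜ < k) ∧
    (∀ A B : Set (Fin N), IsCircleSep A ∧ f A < k → IsCircleSep B ∧ f B < k →
      (IsCircleSep (A ∪ B) ∧ f (A ∪ B) < k) ∨ (IsCircleSep (A ∩ B) ∧ f (A ∩ B) < k)) := by
  constructor
  · rintro A ⟨⟨h1, h2⟩, h3⟩
    exact ⟨⟨h2, by rwa [compl_compl]⟩, by rwa [← hsymm]⟩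
  rintro A B ⟨⟨hA1, hA2⟩, hAf⟩ ⟨⟨hB1, hB2⟩, hBf⟩
  rw [isArc_eq_isArc'] at hA1 hA2 hB1 hB2
  by_cases hint : A ∩ B = ∅
  · right
    rw [hint]
    refine ⟨⟨CircProof.isArc_empty, ?_⟩, by rwa [hempty]⟩
    rw [Set.compl_empty]; exact CircProof.isArc_univ
  by_cases huniv : A ∪ B = Set.univ
  · left
    rw [huniv]
    refine ⟨⟨CircProof.isArc_univ, ?_⟩, ?_⟩
    · rw [Set.compl_univ]; exact CircProof.isArc_empty
    · rw [← Set.compl_empty, ← hsymm, hempty]; exact hk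
  -- nondegenerate case
  obtain ⟨p, hp⟩ := Set.ne_univ_iff_exists_notMem _ |>.1 huniv
  have hne : (A ∩ B).Nonempty := Set.nonempty_iff_ne_empty.2 hint
  obtain ⟨q, hq⟩ := hne
  have hcs_union : IsCircleSep (A ∪ B) := by
    constructor
    · rcases CircProof.isArc_union hA1 hB1 ⟨q, hq⟩ with h | h
      · exact absurd h huniv
      · exact h
    · rw [Set.compl_union]
      exact CircProof.isArc_inter hA2 hB2 (p := q)
        (by rintro (h | h) <;> simp [hq.1, hq.2] at h)
  have hcs_inter : IsCircleSep (A ∩ B) := by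
    constructor
    · exact CircProof.isArc_inter hA1 hB1 hp
    · rw [Set.compl_inter]
      rcases CircProof.isArc_union hA2 hB2 ⟨p, by
          simp only [Set.mem_inter_iff, Set.mem_compl_iff]
          exact ⟨fun h => hp (Or.inl h), fun h => hp (Or.inr h)⟩⟩ with h | h
      · exfalso
        have hq' : q ∈ Aᶜ ∪ Bᶜ := h ▸ Set.mem_univ q
        rcases hq' with h' | h' <;> [exact h' hq.1; exact h' hq.2]
      · exact h
  rcases lt_or_ge (f (A ∪ B)) k with h | h
  · exact Or.inl ⟨hcs_union, h⟩
  · refine Or.inr ⟨hcs_inter, ?_⟩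
    have := hsub A B
    linarith
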